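/- Assume M_j is reversible with respect to Π_j with ‖Π_{j-1}/Π_j‖_∞ < ∞. Then for every f ∈ L²(Π_{j-1}), (1/2) ∫∫ (f(y) − f(x))² Π_{j-1}(dx) Q_j(x, dy) = ⟨f, (I − Q_j) f⟩_{j-1} + ∫ Π_{j-1}(dx) f²(x) ∫ M_j(x, dy) ∫ M_j(y, dz) (Π_{j-1}(z)/Π_j(z) − 1). -/

import Mathlib

open MeasureTheory ProbabilityTheory
open scoped ENNReal

/-- Reversibility of a kernel `M` with respect to a measure `π` (detailed balance). -/
def IsReversible {Θ : Type*} [MeasurableSpace Θ] (M : Kernel Θ Θ) (π : Measure Θ) : Prop :=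
  ∀ A B : Set Θ, MeasurableSet A → MeasurableSet B →
    ∫⁻ x in A, M x B ∂π = ∫⁻ x in B, M x A ∂π

/-- The finite kernel `Q_j(x, ·) = ∫ M(x,dy) ∫_· M(y,dz) r(z)` where `r = Π_{j-1}/Π_j`. -/
noncomputable def Qmeas {Θ : Type*} [MeasurableSpace Θ] (M : Kernel Θ Θ) (r : Θ → ℝ)
    (x : Θ) : Measure Θ :=
  (M x).bind (fun y => (M y).withDensity (fun z => ENNReal.ofReal (r z)))

/-- The operator `Q f(x) = ∫ M(x,dy) ∫ M(y,dz) f(z) r(z)` induced by `Q_j`. -/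
noncomputable def Qop {Θ : Type*} [MeasurableSpace Θ] (M : Kernel Θ Θ) (r : Θ → ℝ)
    (f : Θ → ℝ) (x : Θ) : ℝ :=
  ∫ y, (∫ z, f z * r z ∂(M y)) ∂(M x)

/- Auxiliary lemmas -/

lemma compProd_swap {Θ : Type*} [MeasurableSpace Θ] (π : Measure Θ) [IsProbabilityMeasure π]
    (M : Kernel Θ Θ) [IsMarkovKernel M] (hrev : IsReversible M π) :
    (π ⊗ₘ M).map Prod.swap = π ⊗ₘ M := by
  refine ext_of_generate_finite _ generateFrom_prod.symm isPiSystem_prod ?_ ?_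
  · rintro s ⟨A, hA, B, hB, rfl⟩
    rw [Measure.map_apply measurable_swap (hA.prod hB)]
    have : Prod.swap ⁻¹' (A ×ˢ B) = B ×ˢ A := by ext p; simp [and_comm]
    rw [this, Measure.compProd_apply_prod hB hA, Measure.compProd_apply_prod hA hB,
      hrev A B hA hB]
  · rw [Measure.map_apply measurable_swap MeasurableSet.univ]
    simp

lemma lint_swap {Θ : Type*} [MeasurableSpace Θ] (π : Measure Θ) [IsProbabilityMeasure π]
    (M : Kernel Θ Θ) [IsMarkovKernel M] (hrev : IsReversible M π)
    {u v : Θ → ℝ≥0∞} (hu : Measurable u) (hv : Measurable v) :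
    ∫⁻ x, u x * ∫⁻ y, v y ∂(M x) ∂π = ∫⁻ x, v x * ∫⁻ y, u y ∂(M x) ∂π := by
  have huv : Measurable (fun p : Θ × Θ => u p.1 * v p.2) :=
    (hu.comp measurable_fst).mul (hv.comp measurable_snd)
  have hvu : Measurable (fun p : Θ × Θ => v p.1 * u p.2) :=
    (hv.comp measurable_fst).mul (hu.comp measurable_snd)
  have h1 : ∫⁻ p : Θ × Θ, u p.1 * v p.2 ∂(π ⊗ₘ M) = ∫⁻ x, u x * ∫⁻ y, v y ∂(M x) ∂π := by
    rw [Measure.lintegral_compProd huv]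
    simp_rw [lintegral_const_mul _ hv]
  have h2 : ∫⁻ p : Θ × Θ, v p.1 * u p.2 ∂(π ⊗ₘ M) = ∫⁻ x, v x * ∫⁻ y, u y ∂(M x) ∂π := by
    rw [Measure.lintegral_compProd hvu]
    simp_rw [lintegral_const_mul _ hu]
  rw [← h1, ← h2]
  conv_lhs => rw [← compProd_swap π M hrev, lintegral_map huv measurable_swap]
  simp_rw [Prod.fst_swap, Prod.snd_swap, mul_comm]

lemma lintegral_Qmeas {Θ : Type*} [MeasurableSpace Θ] (M : Kernel Θ Θ) [IsSFiniteKernel M]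
    {r : Θ → ℝ} (hr : Measurable r) (x : Θ) {g : Θ → ℝ≥0∞} (hg : Measurable g) :
    ∫⁻ z, g z ∂(Qmeas M r x)
      = ∫⁻ y, ∫⁻ z, g z * ENNReal.ofReal (r z) ∂(M y) ∂(M x) := by
  have hR : Measurable fun z => ENNReal.ofReal (r z) := hr.ennreal_ofReal
  have hker : Measurable fun y => (M y).withDensity (fun z => ENNReal.ofReal (r z)) := by
    have h := (Kernel.withDensity M (fun _ z => ENNReal.ofReal (r z))).measurable
    have heq : ∀ y, Kernel.withDensity M (fun _ z => ENNReal.ofReal (r z)) y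
        = (M y).withDensity (fun z => ENNReal.ofReal (r z)) := fun y =>
      Kernel.withDensity_apply M (show Measurable (Function.uncurry fun _ z =>
        ENNReal.ofReal (r z)) from hR.comp measurable_snd) y
    simpa [funext heq] using h
  rw [Qmeas, Measure.lintegral_bind hker.aemeasurable hg.aemeasurable]
  refine lintegral_congr fun y => ?_
  rw [lintegral_withDensity_eq_lintegral_mul _ hR hg]
  simp [mul_comm]

section
variable {Θ : Type*} [MeasurableSpace Θ] (M : Kernel Θ Θ) [IsSFiniteKernel M]
  {r : Θ → ℝ}

/-- Bochner integral of a nonnegative function against `Qmeas` as a `toReal` of the iterated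
lintegral; holds unconditionally. -/
lemma integral_Qmeas_nonneg (hr : Measurable r) {g : Θ → ℝ} (hg : Measurable g)
    (hg0 : ∀ z, 0 ≤ g z) (x : Θ) :
    ∫ z, g z ∂(Qmeas M r x)
      = (∫⁻ y, ∫⁻ z, ENNReal.ofReal (g z) * ENNReal.ofReal (r z) ∂(M y) ∂(M x)).toReal := by
  rw [integral_eq_lintegral_of_nonneg_ae (Filter.Eventually.of_forall hg0)
    hg.aestronglyMeasurable, lintegral_Qmeas M hr x hg.ennreal_ofReal]

/-- Iterated Bochner integral of a nonnegative function equals `toReal` of iterated lintegral,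
provided the latter is finite. -/
lemma iterated_integral_nonneg (hr : Measurable r) (hr0 : ∀ z, 0 ≤ r z) {g : Θ → ℝ}
    (hg : Measurable g) (hg0 : ∀ z, 0 ≤ g z) (x : Θ)
    (hfin : ∫⁻ y, ∫⁻ z, ENNReal.ofReal (g z) * ENNReal.ofReal (r z) ∂(M y) ∂(M x) ≠ ∞) :
    ∫ y, (∫ z, g z * r z ∂(M y)) ∂(M x)
      = (∫⁻ y, ∫⁻ z, ENNReal.ofReal (g z) * ENNReal.ofReal (r z) ∂(M y) ∂(M x)).toReal := by
  set A : Θ → ℝ≥0∞ := fun y => ∫⁻ z, ENNReal.ofReal (g z) * ENNReal.ofReal (r z) ∂(M y) with hA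
  have hAmeas : Measurable A :=
    Measurable.lintegral_kernel_prod_right'
      ((hg.ennreal_ofReal.mul hr.ennreal_ofReal).comp measurable_snd)
  have hinner : ∀ y, ∫ z, g z * r z ∂(M y) = (A y).toReal := by
    intro y
    rw [integral_eq_lintegral_of_nonneg_ae
      (Filter.Eventually.of_forall fun z => mul_nonneg (hg0 z) (hr0 z))
      ((hg.mul hr).aestronglyMeasurable)]
    congr 1
    exact lintegral_congr fun z => ENNReal.ofReal_mul (hg0 z)
  simp_rw [hinner]
  exact integral_toReal hAmeas.aemeasurable (ae_lt_top hAmeas hfin)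

/-- `∫ f d(Qmeas x) = Qop f x` when the iterated lintegral of `|f| r` is finite. -/
lemma integral_Qmeas_eq_Qop (hr : Measurable r) (hr0 : ∀ z, 0 ≤ r z) {f : Θ → ℝ}
    (hf : Measurable f) (x : Θ)
    (hfin : ∫⁻ y, ∫⁻ z, ENNReal.ofReal |f z| * ENNReal.ofReal (r z) ∂(M y) ∂(M x) ≠ ∞) :
    ∫ z, f z ∂(Qmeas M r x) = Qop M r f x := by
  set p : Θ → ℝ := fun z => max (f z) 0 with hp
  set n : Θ → ℝ := fun z => max (-f z) 0 with hn
  have hpm : Measurable p := hf.max measurable_const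
  have hnm : Measurable n := hf.neg.max measurable_const
  have hp0 : ∀ z, 0 ≤ p z := fun z => le_max_right _ _
  have hn0 : ∀ z, 0 ≤ n z := fun z => le_max_right _ _
  have hple : ∀ z, p z ≤ |f z| := fun z => max_le (le_abs_self _) (abs_nonneg _)
  have hnle : ∀ z, n z ≤ |f z| := fun z => max_le (neg_le_abs _) (abs_nonneg _)
  have hmono : ∀ {q : Θ → ℝ}, (∀ z, q z ≤ |f z|) →
      ∫⁻ y, ∫⁻ z, ENNReal.ofReal (q z) * ENNReal.ofReal (r z) ∂(M y) ∂(M x) ≠ ∞ := by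
    intro q hq
    refine ne_top_of_le_ne_top hfin ?_
    refine lintegral_mono fun y => lintegral_mono fun z => ?_
    exact mul_le_mul_left (ENNReal.ofReal_le_ofReal (hq z)) _
  have hfpn : f = fun z => p z - n z := by
    funext z; simp [hp, hn, max_zero_sub_max_neg_zero_eq_self]
  -- decompose LHS
  have hint : ∀ {q : Θ → ℝ}, Measurable q → (∀ z, 0 ≤ q z) →
      (∫⁻ y, ∫⁻ z, ENNReal.ofReal (q z) * ENNReal.ofReal (r z) ∂(M y) ∂(M x) ≠ ∞) →
      Integrable q (Qmeas M r x) := by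
    intro q hqm hq0 hqfin
    refine ⟨hqm.aestronglyMeasurable, ?_⟩
    rw [hasFiniteIntegral_def]
    have : ∀ z, ‖q z‖ₑ = ENNReal.ofReal (q z) := fun z => by
      rw [← Real.enorm_eq_ofReal (hq0 z)]
    simp_rw [this]
    rw [lintegral_Qmeas M hr x hqm.ennreal_ofReal]
    exact lt_of_le_of_ne le_top hqfin
  have hLHS : ∫ z, f z ∂(Qmeas M r x)
      = ∫ z, p z ∂(Qmeas M r x) - ∫ z, n z ∂(Qmeas M r x) := by
    conv_lhs => rw [hfpn]
    exact integral_sub (hint hpm hp0 (hmono hple)) (hint hnm hn0 (hmono hnle))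
  -- RHS decomposition
  have hinner_eq : ∀ {q : Θ → ℝ}, Measurable q → (∀ z, 0 ≤ q z) → ∀ y,
      ∫ z, q z * r z ∂(M y)
        = (∫⁻ z, ENNReal.ofReal (q z) * ENNReal.ofReal (r z) ∂(M y)).toReal := by
    intro q hqm hq0 y
    rw [integral_eq_lintegral_of_nonneg_ae
      (Filter.Eventually.of_forall fun z => mul_nonneg (hq0 z) (hr0 z))
      ((hqm.mul hr).aestronglyMeasurable)]
    congr 1
    exact lintegral_congr fun z => ENNReal.ofReal_mul (hq0 z)
  have hAmeas : ∀ {q : Θ → ℝ}, Measurable q →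
      Measurable fun y => ∫⁻ z, ENNReal.ofReal (q z) * ENNReal.ofReal (r z) ∂(M y) :=
    fun {q} hqm => Measurable.lintegral_kernel_prod_right'
      ((hqm.ennreal_ofReal.mul hr.ennreal_ofReal).comp measurable_snd)
  have houter_int : ∀ {q : Θ → ℝ}, Measurable q → (∀ z, 0 ≤ q z) →
      (∫⁻ y, ∫⁻ z, ENNReal.ofReal (q z) * ENNReal.ofReal (r z) ∂(M y) ∂(M x) ≠ ∞) →
      Integrable (fun y => ∫ z, q z * r z ∂(M y)) (M x) := by
    intro q hqm hq0 hqfin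
    have := integrable_toReal_of_lintegral_ne_top (hAmeas hqm).aemeasurable hqfin
    refine this.congr (Filter.Eventually.of_forall fun y => ?_)
    exact (hinner_eq hqm hq0 y).symm
  have hae : ∀ᵐ y ∂(M x),
      ∫⁻ z, ENNReal.ofReal |f z| * ENNReal.ofReal (r z) ∂(M y) < ∞ :=
    ae_lt_top (hAmeas hf.abs) hfin
  have hsplit : ∀ᵐ y ∂(M x),
      ∫ z, f z * r z ∂(M y) = ∫ z, p z * r z ∂(M y) - ∫ z, n z * r z ∂(M y) := by
    filter_upwards [hae] with y hy
    have hint2 : ∀ {q : Θ → ℝ}, Measurable q → (∀ z, 0 ≤ q z) → (∀ z, q z ≤ |f z|) →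
        Integrable (fun z => q z * r z) (M y) := by
      intro q hqm hq0 hqle
      refine ⟨(hqm.mul hr).aestronglyMeasurable, ?_⟩
      rw [hasFiniteIntegral_def]
      have heq : ∀ z, ‖q z * r z‖ₑ = ENNReal.ofReal (q z) * ENNReal.ofReal (r z) := by
        intro z
        rw [← ENNReal.ofReal_mul (hq0 z), ← Real.enorm_eq_ofReal (mul_nonneg (hq0 z) (hr0 z))]
      simp_rw [heq]
      refine lt_of_le_of_lt (lintegral_mono fun z => ?_) hy
      exact mul_le_mul_left (ENNReal.ofReal_le_ofReal (hqle z)) _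
    have : (fun z => f z * r z) = fun z => p z * r z - n z * r z := by
      funext z; rw [← sub_mul]; congr 1
      simp [hp, hn, max_zero_sub_max_neg_zero_eq_self]
    rw [this, integral_sub (hint2 hpm hp0 hple) (hint2 hnm hn0 hnle)]
  have hRHS : Qop M r f x
      = ∫ y, (∫ z, p z * r z ∂(M y)) ∂(M x) - ∫ y, (∫ z, n z * r z ∂(M y)) ∂(M x) := by
    rw [Qop, integral_congr_ae hsplit]
    exact integral_sub (houter_int hpm hp0 (hmono hple)) (houter_int hnm hn0 (hmono hnle))
  rw [hLHS, hRHS,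
    integral_Qmeas_nonneg M hr hpm hp0 x, integral_Qmeas_nonneg M hr hnm hn0 x,
    iterated_integral_nonneg M hr hr0 hpm hp0 x (hmono hple),
    iterated_integral_nonneg M hr hr0 hnm hn0 x (hmono hnle)]

end

/- STATEMENT 17 -/
theorem dirichlet_form_identity
    {Θ : Type*} [MeasurableSpace Θ]
    (πprev πcur : Measure Θ)
    (hπprev : IsProbabilityMeasure πprev) (hπcur : IsProbabilityMeasure πcur)
    (M : Kernel Θ Θ) (hM : IsMarkovKernel M)
    (hrev : IsReversible M πcur)
    (r : Θ → ℝ) (hrmeas : Measurable r) (hrnonneg : ∀ z, 0 ≤ r z)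
    (hdens : πprev = πcur.withDensity (fun z => ENNReal.ofReal (r z)))
    (ρ : ℝ) (hρ : ∀ z, r z ≤ ρ)
    (f : Θ → ℝ) (hfmeas : Measurable f)
    (hfL2 : Integrable (fun x => (f x) ^ 2) πprev) :
    (1 / 2) * ∫ x, (∫ y, (f y - f x) ^ 2 ∂(Qmeas M r x)) ∂πprev =
      (∫ x, f x * (f x - Qop M r f x) ∂πprev) +
        ∫ x, (f x) ^ 2 * (∫ y, (∫ z, (r z - 1) ∂(M y)) ∂(M x)) ∂πprev := by
  haveI := hM
  haveI := hπprev
  haveI := hπcur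
  set R : Θ → ℝ≥0∞ := fun z => ENNReal.ofReal (r z) with hRdef
  have hR : Measurable R := hrmeas.ennreal_ofReal
  set Gf : Θ → ℝ≥0∞ := fun z => ENNReal.ofReal (f z ^ 2) with hGfdef
  have hGf : Measurable Gf := (hfmeas.pow_const 2).ennreal_ofReal
  set Ff : Θ → ℝ≥0∞ := fun z => ENNReal.ofReal |f z| with hFfdef
  have hFf : Measurable Ff := hfmeas.abs.ennreal_ofReal
  set V : Θ → ℝ≥0∞ := fun x => ∫⁻ y, ∫⁻ z, R z ∂(M y) ∂(M x) with hVdef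
  set W : Θ → ℝ≥0∞ := fun x => ∫⁻ y, ∫⁻ z, Gf z * R z ∂(M y) ∂(M x) with hWdef
  set D : Θ → ℝ≥0∞ := fun x => ∫⁻ y, ∫⁻ z, Ff z * R z ∂(M y) ∂(M x) with hDdef
  set ρ' : ℝ≥0∞ := ENNReal.ofReal ρ with hρ'def
  -- Θ is nonempty, so ρ ≥ 0
  have hΘ : Nonempty Θ := by
    by_contra h
    rw [not_nonempty_iff] at h
    have := hπcur.measure_univ
    simp [Set.univ_eq_empty_iff.2 h] at this
  have hρ0 : 0 ≤ ρ := le_trans (hrnonneg hΘ.some) (hρ hΘ.some)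
  -- measurability of double lintegrals
  have hLL : ∀ {u : Θ → ℝ≥0∞}, Measurable u →
      Measurable fun x => ∫⁻ y, ∫⁻ z, u z ∂(M y) ∂(M x) := by
    intro u hu
    exact Measurable.lintegral_kernel_prod_right'
      ((Measurable.lintegral_kernel_prod_right' (hu.comp measurable_snd)).comp measurable_snd)
  have hVmeas : Measurable V := hLL hR
  have hWmeas : Measurable W := hLL (hGf.mul hR)
  have hDmeas : Measurable D := hLL (hFf.mul hR)
  -- V ≤ ρ'
  have hinnerV : ∀ y, ∫⁻ z, R z ∂(M y) ≤ ρ' := by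
    intro y
    calc ∫⁻ z, R z ∂(M y) ≤ ∫⁻ _, ρ' ∂(M y) :=
          lintegral_mono fun z => ENNReal.ofReal_le_ofReal (hρ z)
    _ = ρ' := by simp
  have hVle : ∀ x, V x ≤ ρ' := by
    intro x
    calc V x ≤ ∫⁻ _, ρ' ∂(M x) := lintegral_mono fun y => hinnerV y
    _ = ρ' := by simp
  have hVlt : ∀ x, V x < ∞ := fun x => lt_of_le_of_lt (hVle x) ENNReal.ofReal_lt_top
  -- total mass of Qmeas
  have hQuniv : ∀ x, Qmeas M r x Set.univ = V x := by
    intro x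
    rw [← lintegral_one, lintegral_Qmeas M hrmeas x measurable_const]
    simp
    rfl
  haveI hQfin : ∀ x, IsFiniteMeasure (Qmeas M r x) := by
    intro x
    constructor
    rw [hQuniv x]
    exact hVlt x
  -- lintegral over πprev in terms of πcur
  have hlint_prev : ∀ {h : Θ → ℝ≥0∞}, Measurable h →
      ∫⁻ x, h x ∂πprev = ∫⁻ x, R x * h x ∂πcur := by
    intro h hh
    rw [hdens, lintegral_withDensity_eq_lintegral_mul _ hR hh]
    rfl
  -- the key self-adjointness identity
  have hK : ∫⁻ x, W x ∂πprev = ∫⁻ x, Gf x * V x ∂πprev := by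
    rw [hlint_prev hWmeas, hlint_prev (h := fun x => Gf x * V x) (hGf.mul hVmeas)]
    have hLgr : Measurable fun y => ∫⁻ z, Gf z * R z ∂(M y) :=
      Measurable.lintegral_kernel_prod_right' ((hGf.mul hR).comp measurable_snd)
    have hLR : Measurable fun y => ∫⁻ z, R z ∂(M y) :=
      Measurable.lintegral_kernel_prod_right' (hR.comp measurable_snd)
    calc ∫⁻ x, R x * W x ∂πcur
        = ∫⁻ x, (∫⁻ z, Gf z * R z ∂(M x)) * ∫⁻ y, R y ∂(M x) ∂πcur :=
          lint_swap πcur M hrev hR hLgr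
      _ = ∫⁻ x, (∫⁻ z, R z ∂(M x)) * ∫⁻ y, Gf y * R y ∂(M x) ∂πcur :=
          lintegral_congr fun x => mul_comm _ _
      _ = ∫⁻ x, (Gf x * R x) * ∫⁻ y, ∫⁻ z, R z ∂(M y) ∂(M x) ∂πcur :=
          lint_swap πcur M hrev hLR (hGf.mul hR)
      _ = ∫⁻ x, R x * (Gf x * V x) ∂πcur := lintegral_congr fun x => by rw [hVdef]; ring
  -- finiteness facts
  have hGfin : ∫⁻ x, Gf x ∂πprev ≠ ∞ := by
    have h := hfL2.2
    rw [hasFiniteIntegral_def] at h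
    have heq : ∀ x, ‖f x ^ 2‖ₑ = Gf x := fun x =>
      Real.enorm_eq_ofReal (sq_nonneg _)
    simp_rw [heq] at h
    exact h.ne
  have hWfin : ∫⁻ x, W x ∂πprev ≠ ∞ := by
    have hle : ∫⁻ x, W x ∂πprev ≤ (∫⁻ x, Gf x ∂πprev) * ρ' := by
      rw [hK, ← lintegral_mul_const _ hGf]
      exact lintegral_mono fun x => mul_le_mul_right (hVle x) _
    exact ne_top_of_le_ne_top (ENNReal.mul_ne_top hGfin ENNReal.ofReal_ne_top) hle
  have hWae : ∀ᵐ x ∂πprev, W x < ∞ := ae_lt_top hWmeas hWfin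
  -- Cauchy-Schwarz on Qmeas
  have hconj : Real.HolderConjugate 2 2 := Real.HolderConjugate.two_two
  have hFfsq : ∀ z, Ff z ^ (2:ℝ) = Gf z := by
    intro z
    rw [hFfdef, hGfdef]
    rw [ENNReal.ofReal_rpow_of_nonneg (abs_nonneg _) (by norm_num), Real.rpow_two, sq_abs]
  have hDQ : ∀ x, ∫⁻ z, Ff z ∂(Qmeas M r x) = D x := fun x => lintegral_Qmeas M hrmeas x hFf
  have hWQ : ∀ x, ∫⁻ z, Gf z ∂(Qmeas M r x) = W x := fun x => lintegral_Qmeas M hrmeas x hGf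
  have hCS : ∀ x, D x ≤ W x ^ (1/2:ℝ) * ρ' ^ (1/2:ℝ) := by
    intro x
    have h3 := ENNReal.lintegral_mul_le_Lp_mul_Lq (Qmeas M r x) hconj
      hFf.aemeasurable (aemeasurable_const (b := (1:ℝ≥0∞)))
    simp only [Pi.mul_apply, mul_one, ENNReal.one_rpow, lintegral_one] at h3
    simp_rw [hFfsq] at h3
    rw [hDQ x, hWQ x, hQuniv x] at h3
    exact h3.trans (mul_le_mul_right (ENNReal.rpow_le_rpow (hVle x) (by norm_num)) _)
  have hDlt : ∀ x, W x < ∞ → D x < ∞ := by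
    intro x hWx
    refine lt_of_le_of_lt (hCS x) ?_
    exact ENNReal.mul_lt_top (ENNReal.rpow_lt_top_of_nonneg (by norm_num) hWx.ne)
      (ENNReal.rpow_lt_top_of_nonneg (by norm_num) ENNReal.ofReal_ne_top)
  -- measurability of Qop f
  have hQfmeas : Measurable (Qop M r f) := by
    have h1 : StronglyMeasurable fun p : Θ × Θ => f p.2 * r p.2 :=
      ((hfmeas.comp measurable_snd).mul (hrmeas.comp measurable_snd)).stronglyMeasurable
    have h2 := h1.integral_kernel_prod_right' (κ := M)
    have h3 : StronglyMeasurable fun p : Θ × Θ => ∫ z, f z * r z ∂(M p.2) :=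
      h2.comp_measurable measurable_snd
    exact (h3.integral_kernel_prod_right' (κ := M)).measurable
  -- pointwise bound on Qop f
  have hnormfr : ∀ z, ‖f z * r z‖ₑ = Ff z * R z := by
    intro z
    rw [Real.enorm_eq_ofReal_abs, abs_mul, abs_of_nonneg (hrnonneg z),
      ENNReal.ofReal_mul (abs_nonneg _)]
  have hQfbound : ∀ x, (‖Qop M r f x‖₊ : ℝ≥0∞) ≤ D x := by
    intro x
    calc (‖Qop M r f x‖₊ : ℝ≥0∞)
        ≤ ∫⁻ y, ‖∫ z, f z * r z ∂(M y)‖ₑ ∂(M x) := enorm_integral_le_lintegral_enorm _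
      _ ≤ ∫⁻ y, ∫⁻ z, ‖f z * r z‖ₑ ∂(M y) ∂(M x) :=
          lintegral_mono fun y => enorm_integral_le_lintegral_enorm _
      _ = D x := lintegral_congr fun y => lintegral_congr fun z => hnormfr z
  -- integrability of f * Qop f
  have hFfW : ∀ x, Ff x * W x ^ (1/2:ℝ) ≤ Gf x + W x := by
    intro x
    rcases le_total (Ff x) (W x ^ (1/2:ℝ)) with h | h
    · refine le_trans (mul_le_mul_left h _) ?_
      have : W x ^ (1/2:ℝ) * W x ^ (1/2:ℝ) = W x := by
        rw [← ENNReal.rpow_add_of_nonneg _ _ (by norm_num) (by norm_num)]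
        norm_num
      rw [this]
      exact le_add_self
    · refine le_trans (mul_le_mul_right h _) ?_
      have : Ff x * Ff x = Gf x := by
        show ENNReal.ofReal |f x| * ENNReal.ofReal |f x| = ENNReal.ofReal (f x ^ 2)
        rw [← ENNReal.ofReal_mul (abs_nonneg _), abs_mul_abs_self]
        congr 1
        ring
      rw [this]
      exact self_le_add_right _ _
  have hfQf_int : Integrable (fun x => f x * Qop M r f x) πprev := by
    refine ⟨(hfmeas.mul hQfmeas).aestronglyMeasurable, ?_⟩
    rw [hasFiniteIntegral_def]
    have hb : ∀ x, (‖f x * Qop M r f x‖₊ : ℝ≥0∞) ≤ ρ' ^ (1/2:ℝ) * (Gf x + W x) := by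
      intro x
      calc (‖f x * Qop M r f x‖₊ : ℝ≥0∞) = (‖f x‖₊ : ℝ≥0∞) * ‖Qop M r f x‖₊ := by
            rw [nnnorm_mul, ENNReal.coe_mul]
        _ ≤ Ff x * D x := by
            rw [show (‖f x‖₊ : ℝ≥0∞) = Ff x from Real.enorm_eq_ofReal_abs _]
            exact mul_le_mul_right (hQfbound x) _
        _ ≤ Ff x * (W x ^ (1/2:ℝ) * ρ' ^ (1/2:ℝ)) := mul_le_mul_right (hCS x) _
        _ = ρ' ^ (1/2:ℝ) * (Ff x * W x ^ (1/2:ℝ)) := by ring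
        _ ≤ ρ' ^ (1/2:ℝ) * (Gf x + W x) := mul_le_mul_right (hFfW x) _
    calc ∫⁻ x, (‖f x * Qop M r f x‖₊ : ℝ≥0∞) ∂πprev
        ≤ ∫⁻ x, ρ' ^ (1/2:ℝ) * (Gf x + W x) ∂πprev := lintegral_mono hb
      _ = ρ' ^ (1/2:ℝ) * ((∫⁻ x, Gf x ∂πprev) + ∫⁻ x, W x ∂πprev) := by
          rw [lintegral_const_mul (f := fun x => Gf x + W x) _ (hGf.add hWmeas), lintegral_add_left hGf]
      _ < ∞ := by
          refine ENNReal.mul_lt_top ?_ ?_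
          · exact ENNReal.rpow_lt_top_of_nonneg (by norm_num) ENNReal.ofReal_ne_top
          · exact ENNReal.add_lt_top.2 ⟨lt_of_le_of_ne le_top hGfin, lt_of_le_of_ne le_top hWfin⟩
  have hWtoReal_int : Integrable (fun x => (W x).toReal) πprev :=
    integrable_toReal_of_lintegral_ne_top hWmeas.aemeasurable hWfin
  have hVtoReal_le : ∀ x, (V x).toReal ≤ ρ := fun x =>
    ENNReal.toReal_le_of_le_ofReal hρ0 (hVle x)
  have hfVint : Integrable (fun x => f x ^ 2 * (V x).toReal) πprev := by
    refine Integrable.mono' (hfL2.const_mul ρ)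
      ((hfmeas.pow_const 2).mul hVmeas.ennreal_toReal).aestronglyMeasurable
      (Filter.Eventually.of_forall fun x => ?_)
    rw [Real.norm_eq_abs, abs_of_nonneg (mul_nonneg (sq_nonneg _) ENNReal.toReal_nonneg),
      mul_comm (ρ : ℝ) _]
    exact mul_le_mul_of_nonneg_left (hVtoReal_le x) (sq_nonneg _)
  -- the second integral on the RHS
  have hq1 : ∀ x, ∫ y, (∫ z, (r z - 1) ∂(M y)) ∂(M x) = (V x).toReal - 1 := by
    intro x
    have hrint : ∀ y, Integrable r (M y) := by
      intro y
      refine ⟨hrmeas.aestronglyMeasurable, ?_⟩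
      rw [hasFiniteIntegral_def]
      calc ∫⁻ z, ‖r z‖ₑ ∂(M y) = ∫⁻ z, R z ∂(M y) :=
            lintegral_congr fun z => Real.enorm_eq_ofReal (hrnonneg z)
        _ ≤ ρ' := hinnerV y
        _ < ∞ := ENNReal.ofReal_lt_top
    have hinner : ∀ y, ∫ z, (r z - 1) ∂(M y) = (∫⁻ z, R z ∂(M y)).toReal - 1 := by
      intro y
      rw [integral_sub (hrint y) (integrable_const 1), integral_const,
        integral_eq_lintegral_of_nonneg_ae (Filter.Eventually.of_forall hrnonneg)
          hrmeas.aestronglyMeasurable]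
      simp
      rfl
    simp_rw [hinner]
    have hLRm : Measurable fun y => ∫⁻ z, R z ∂(M y) :=
      Measurable.lintegral_kernel_prod_right' (hR.comp measurable_snd)
    have hLRint : Integrable (fun y => (∫⁻ z, R z ∂(M y)).toReal) (M x) :=
      integrable_toReal_of_lintegral_ne_top hLRm.aemeasurable
        (ne_top_of_le_ne_top ENNReal.ofReal_ne_top (hVle x))
    rw [integral_sub hLRint (integrable_const 1), integral_const,
      integral_toReal hLRm.aemeasurable
        (Filter.Eventually.of_forall fun y => lt_of_le_of_lt (hinnerV y) ENNReal.ofReal_lt_top)]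
    simp [hVdef]
  -- a.e. expansion of the inner integral on the LHS
  have hexp : ∀ᵐ x ∂πprev, ∫ y, (f y - f x) ^ 2 ∂(Qmeas M r x)
      = (W x).toReal - 2 * (f x * Qop M r f x) + f x ^ 2 * (V x).toReal := by
    filter_upwards [hWae] with x hWx
    have hDx : D x < ∞ := hDlt x hWx
    have hfQ : Integrable f (Qmeas M r x) := by
      refine ⟨hfmeas.aestronglyMeasurable, ?_⟩
      rw [hasFiniteIntegral_def]
      have : ∫⁻ z, ‖f z‖ₑ ∂(Qmeas M r x) = D x := by
        rw [← hDQ x]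
        exact lintegral_congr fun z => Real.enorm_eq_ofReal_abs _
      rw [this]; exact hDx
    have hf2Q : Integrable (fun y => f y ^ 2) (Qmeas M r x) := by
      refine ⟨(hfmeas.pow_const 2).aestronglyMeasurable, ?_⟩
      rw [hasFiniteIntegral_def]
      have : ∫⁻ z, ‖f z ^ 2‖ₑ ∂(Qmeas M r x) = W x := by
        rw [← hWQ x]
        exact lintegral_congr fun z => Real.enorm_eq_ofReal (sq_nonneg _)
      rw [this]; exact hWx
    have hexpand : (fun y => (f y - f x) ^ 2)
        = fun y => (f y ^ 2 - 2 * f x * f y) + f x ^ 2 := by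
      funext y; ring
    have h1 : ∫ y, f y ^ 2 ∂(Qmeas M r x) = (W x).toReal := by
      rw [integral_eq_lintegral_of_nonneg_ae (Filter.Eventually.of_forall fun y => sq_nonneg _)
        (hfmeas.pow_const 2).aestronglyMeasurable, lintegral_Qmeas M hrmeas x hGf]
    have h2 : ∫ y, f y ∂(Qmeas M r x) = Qop M r f x :=
      integral_Qmeas_eq_Qop M hrmeas hrnonneg hfmeas x hDx.ne
    have hi1 : Integrable (fun y => f y ^ 2 - 2 * f x * f y) (Qmeas M r x) :=
      hf2Q.sub (hfQ.const_mul (2 * f x))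
    have hi2 : Integrable (fun y => 2 * f x * f y) (Qmeas M r x) :=
      hfQ.const_mul (2 * f x)
    rw [hexpand, integral_add hi1 (integrable_const _), integral_sub hf2Q hi2,
      integral_const_mul, integral_const, h1, h2, measureReal_def, hQuniv x, smul_eq_mul]
    ring
  -- conversion of ∫ (W x).toReal
  have hT13 : ∫ x, (W x).toReal ∂πprev = ∫ x, f x ^ 2 * (V x).toReal ∂πprev := by
    rw [integral_toReal hWmeas.aemeasurable hWae,
      show ∫ x, f x ^ 2 * (V x).toReal ∂πprev = (∫⁻ x, Gf x * V x ∂πprev).toReal by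
        rw [integral_eq_lintegral_of_nonneg_ae
          (Filter.Eventually.of_forall fun x =>
            mul_nonneg (sq_nonneg _) ENNReal.toReal_nonneg)
          ((hfmeas.pow_const 2).mul hVmeas.ennreal_toReal).aestronglyMeasurable]
        congr 1
        refine lintegral_congr fun x => ?_
        rw [ENNReal.ofReal_mul (sq_nonneg _), ENNReal.ofReal_toReal (hVlt x).ne], hK]
  -- assemble everything
  have hLHS : ∫ x, (∫ y, (f y - f x) ^ 2 ∂(Qmeas M r x)) ∂πprev
      = ∫ x, (W x).toReal ∂πprev - 2 * ∫ x, f x * Qop M r f x ∂πprev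
        + ∫ x, f x ^ 2 * (V x).toReal ∂πprev := by
    have hi1 : Integrable (fun x => (W x).toReal - 2 * (f x * Qop M r f x)) πprev :=
      hWtoReal_int.sub (hfQf_int.const_mul 2)
    have hi2 : Integrable (fun x => 2 * (f x * Qop M r f x)) πprev :=
      hfQf_int.const_mul 2
    rw [integral_congr_ae hexp, integral_add hi1 hfVint, integral_sub hWtoReal_int hi2,
      integral_const_mul]
  have hRHS1 : ∫ x, f x * (f x - Qop M r f x) ∂πprev
      = ∫ x, f x ^ 2 ∂πprev - ∫ x, f x * Qop M r f x ∂πprev := by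
    rw [show (fun x => f x * (f x - Qop M r f x))
        = fun x => f x ^ 2 - f x * Qop M r f x by funext x; ring]
    exact integral_sub hfL2 hfQf_int
  have hRHS2 : ∫ x, f x ^ 2 * (∫ y, (∫ z, (r z - 1) ∂(M y)) ∂(M x)) ∂πprev
      = ∫ x, f x ^ 2 * (V x).toReal ∂πprev - ∫ x, f x ^ 2 ∂πprev := by
    simp_rw [hq1]
    rw [show (fun x => f x ^ 2 * ((V x).toReal - 1))
        = fun x => f x ^ 2 * (V x).toReal - f x ^ 2 by funext x; ring]
    exact integral_sub hfVint hfL2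
  rw [hLHS, hRHS1, hRHS2, hT13]
  ring
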